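/- Let F be a linearly ordered field with integer part I and let α, β ∈ F with α > β ≥ 2. Then N_β \ N_α is nonempty. -/

import Mathlib

/-- `N_α`: the set `{⌊n·α⌋ : n ∈ I, n ≥ 0}`, where `fl` is the floor function
associated to the integer part `I` of `F`. -/
def Nset {F : Type*} [Field F] [LinearOrder F] [IsStrictOrderedRing F] (I : Subring F) (fl : F → F) (α : F) : Set F :=
  {y | ∃ n, n ∈ I ∧ 0 ≤ n ∧ y = fl (n * α)}

theorem stmt_3 {F : Type*} [Field F] [LinearOrder F] [IsStrictOrderedRing F] (I : Subring F) (fl : F → F)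
    (hdisc : ∀ x ∈ I, ¬(0 < x ∧ x < 1))
    (hfl : ∀ x : F, fl x ∈ I ∧ fl x ≤ x ∧ x < fl x + 1)
    (α β : F) (hβ : 2 ≤ β) (hαβ : β < α) :
    (Nset I fl β \ Nset I fl α).Nonempty := by
  have hc : 0 < α - β := by linarith
  -- floor is monotone
  have mono : ∀ x y : F, x ≤ y → fl x ≤ fl y := by
    intro x y hxy
    by_contra h
    push_neg at h
    exact hdisc (fl x - fl y) (sub_mem (hfl x).1 (hfl y).1)
      ⟨by linarith, by have h1 := (hfl x).2.1; have h2 := (hfl y).2.2; linarith⟩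
  set k := fl (1 / (α - β)) with hkdef
  have hkI : k ∈ I := (hfl _).1
  have hkle : k ≤ 1 / (α - β) := (hfl _).2.1
  have hkgt : 1 / (α - β) < k + 1 := (hfl _).2.2
  have hinvpos : 0 < 1 / (α - β) := by positivity
  have hk0 : 0 ≤ k := by
    by_contra h
    push_neg at h
    exact hdisc (-k) (neg_mem hkI) ⟨by linarith, by linarith⟩
  set n := k + 1 with hndef
  have hnI : n ∈ I := add_mem hkI (one_mem I)
  have hn0 : 0 ≤ n := by linarith
  have key1 : 1 < n * (α - β) := by
    rw [hndef]
    calc 1 = (1 / (α - β)) * (α - β) := by field_simp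
    _ < (k + 1) * (α - β) := by
        exact mul_lt_mul_of_pos_right hkgt hc
  have key2 : k * (α - β) ≤ 1 := by
    calc k * (α - β) ≤ (1 / (α - β)) * (α - β) := mul_le_mul_of_nonneg_right hkle hc.le
    _ = 1 := by field_simp
  refine ⟨fl (n * β), ⟨n, hnI, hn0, rfl⟩, ?_⟩
  rintro ⟨m, hmI, hm0, heq⟩
  -- heq : fl (n * β) = fl (m * α)
  rw [mul_sub] at key1 key2
  have hnb : n * β = k * β + β := by rw [hndef]; ring
  have hfnb := hfl (n * β)
  have hfna := hfl (n * α)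
  have hfma := hfl (m * α)
  have hlt : fl (m * α) < fl (n * α) := by
    have h1 : fl (m * α) ≤ n * β := by rw [← heq]; exact hfnb.2.1
    have h2 : n * β < fl (n * α) := by have := hfna.2.2; linarith
    linarith
  have hmn : m * α < n * α := by
    by_contra h
    push_neg at h
    exact absurd (mono _ _ h) (not_le.mpr hlt)
  have hα0 : 0 < α := by linarith
  have hmltn : m < n := lt_of_mul_lt_mul_right (by simpa [mul_comm] using hmn) hα0.le
  have hmk : m ≤ k := by
    by_contra h
    push_neg at h
    exact hdisc (n - m) (sub_mem hnI hmI) ⟨by linarith, by linarith⟩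
  have h3 : fl (n * β) ≤ k * β + 1 := by
    have : fl (m * α) ≤ m * α := hfma.2.1
    have hma : m * α ≤ k * α := mul_le_mul_of_nonneg_right hmk hα0.le
    linarith
  have h4 : n * β < fl (n * β) + 1 := hfnb.2.2
  linarith
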